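/- Let E and M be finite index types. Let A be a unitary matrix and Π an orthogonal projection matrix, both over ℂ and indexed by E × M. Let ψ ∈ ℂ^E be a unit vector, let (m_i)_{i ∈ J} be a finite orthonormal family in ℂ^M, let q : J → ℝ with q_i ≥ 0, and set μ = Σ_j q_j · (m_j m_jᴴ). Suppose that for every i ∈ J, ‖Π · A · (ψ ⊗ m_i)‖² ≥ 1 − λ. Then for every i ∈ J: Re((ψ ⊗ m_i)ᴴ · Aᴴ · Π · A · ((ψψᴴ) ⊗ₖ μ) · (ψ ⊗ m_i)) = q_i · ‖Π · A · (ψ ⊗ m_i)‖² ≥ q_i · (1 − λ). -/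
import Mathlib


open scoped BigOperators Matrix Kronecker

lemma vecMulVec_mulVec' {n m : Type} [Fintype n] (a : m → ℂ) (b : n → ℂ) (x : n → ℂ) :
    Matrix.vecMulVec a b *ᵥ x = (b ⬝ᵥ x) • a := by
  ext i
  simp [Matrix.mulVec, Matrix.vecMulVec_apply, dotProduct, Finset.sum_mul,
    Finset.mul_sum, mul_comm, mul_assoc, mul_left_comm]

lemma sum_mulVec' {n m J : Type} [Fintype n] [Fintype J]
    (B : J → Matrix m n ℂ) (x : n → ℂ) :
    (∑ j, B j) *ᵥ x = ∑ j, B j *ᵥ x := by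
  ext i
  simp only [Matrix.mulVec, dotProduct, Matrix.sum_apply, Finset.sum_mul,
    Finset.sum_apply]
  exact Finset.sum_comm

/--
(Quantitative core of Equation (2) in Lemma 3.3.)  If for
every pure component `m_i` of Bob's mixed message `μ = Σ_j q_j · m_j m_jᴴ` the
state `A(ψ ⊗ m_i)` lies in the range of the key projector `Π` up to error `λ`,
i.e. `‖Π·A·(ψ ⊗ m_i)‖² ≥ 1 − λ`, then for every `i`:
`Re((ψ ⊗ m_i)ᴴ · Aᴴ·Π·A · ((ψψᴴ) ⊗ₖ μ) · (ψ ⊗ m_i))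
  = q_i · ‖Π·A·(ψ ⊗ m_i)‖² ≥ q_i · (1 − λ)`.
-/
theorem eve_message_close_to_real_message
    {E M J : Type} [Fintype E] [Fintype M] [Fintype J]
    [DecidableEq E] [DecidableEq M] [DecidableEq J]
    (A : Matrix (E × M) (E × M) ℂ) (hA : Aᴴ * A = 1)
    (Pj : Matrix (E × M) (E × M) ℂ) (hPjH : Pjᴴ = Pj) (hPj2 : Pj * Pj = Pj)
    (ψ : E → ℂ) (hψ : star ψ ⬝ᵥ ψ = 1)
    (m : J → M → ℂ)
    (hm : ∀ i j : J, star (m j) ⬝ᵥ m i = if i = j then 1 else 0)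
    (q : J → ℝ) (hq : ∀ j, 0 ≤ q j)
    (μ : Matrix M M ℂ)
    (hμ : μ = ∑ j, (q j : ℂ) • Matrix.vecMulVec (m j) (star (m j)))
    (lam : ℝ)
    (hkey : ∀ i : J,
      1 - lam ≤ (star ((Pj * A) *ᵥ fun p : E × M => ψ p.1 * m i p.2) ⬝ᵥ
        ((Pj * A) *ᵥ fun p : E × M => ψ p.1 * m i p.2)).re) :
    ∀ i : J,
      (star (fun p : E × M => ψ p.1 * m i p.2) ⬝ᵥ
          ((Aᴴ * Pj * A * (Matrix.vecMulVec ψ (star ψ) ⊗ₖ μ)) *ᵥ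
            fun p : E × M => ψ p.1 * m i p.2)).re
        = q i * (star ((Pj * A) *ᵥ fun p : E × M => ψ p.1 * m i p.2) ⬝ᵥ
            ((Pj * A) *ᵥ fun p : E × M => ψ p.1 * m i p.2)).re ∧
      q i * (1 - lam)
        ≤ q i * (star ((Pj * A) *ᵥ fun p : E × M => ψ p.1 * m i p.2) ⬝ᵥ
            ((Pj * A) *ᵥ fun p : E × M => ψ p.1 * m i p.2)).re := by
  intro i
  set v : (E × M) → ℂ := fun p => ψ p.1 * m i p.2 with hv
  -- step 1: Kronecker factor acts as q i on v
  have hvmv : ∀ j : J,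
      Matrix.vecMulVec ψ (star ψ) ⊗ₖ Matrix.vecMulVec (m j) (star (m j))
        = Matrix.vecMulVec (fun p : E × M => ψ p.1 * m j p.2)
            (star fun p : E × M => ψ p.1 * m j p.2) := by
    intro j
    ext p p'
    simp [Matrix.vecMulVec_apply, mul_mul_mul_comm]
  have hdot : ∀ j : J,
      (star fun p : E × M => ψ p.1 * m j p.2) ⬝ᵥ v
        = (star ψ ⬝ᵥ ψ) * (star (m j) ⬝ᵥ m i) := by
    intro j
    simp only [dotProduct, hv, Pi.star_apply, Fintype.sum_prod_type,
      Finset.mul_sum, Finset.sum_mul, star_mul']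
    rw [Finset.sum_comm]
    refine Finset.sum_congr rfl fun e' _ => Finset.sum_congr rfl fun x' _ => by ring
  have hK : (Matrix.vecMulVec ψ (star ψ) ⊗ₖ μ) *ᵥ v = (q i : ℂ) • v := by
    have hKr : Matrix.vecMulVec ψ (star ψ) ⊗ₖ μ
        = ∑ j, (q j : ℂ) • Matrix.vecMulVec (fun p : E × M => ψ p.1 * m j p.2)
            (star fun p : E × M => ψ p.1 * m j p.2) := by
      rw [hμ]
      ext p p'
      obtain ⟨e, x⟩ := p
      obtain ⟨e', x'⟩ := p'
      simp only [Matrix.kroneckerMap_apply, Matrix.sum_apply, Matrix.smul_apply,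
        Matrix.vecMulVec_apply, Pi.star_apply, smul_eq_mul, Finset.mul_sum, star_mul']
      refine Finset.sum_congr rfl fun j _ => by ring
    rw [hKr, sum_mulVec']
    simp only [Matrix.smul_mulVec, vecMulVec_mulVec', hdot, hψ, hm, one_mul]
    rw [Fintype.sum_eq_single i]
    · simp [hv]
    · intro j hj
      simp [Ne.symm hj]
  have hzre : (star v ⬝ᵥ ((Aᴴ * Pj * A * (Matrix.vecMulVec ψ (star ψ) ⊗ₖ μ)) *ᵥ v)).re
      = q i * (star ((Pj * A) *ᵥ v) ⬝ᵥ ((Pj * A) *ᵥ v)).re := by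
    rw [← Matrix.mulVec_mulVec, hK, Matrix.mulVec_smul, dotProduct_smul]
    have hfac : Aᴴ * Pj * A = (Pj * A)ᴴ * (Pj * A) := by
      rw [Matrix.conjTranspose_mul, hPjH]
      conv_lhs => rw [← hPj2]
      simp [Matrix.mul_assoc]
    rw [hfac, ← Matrix.mulVec_mulVec, Matrix.dotProduct_mulVec, ← Matrix.star_mulVec]
    rw [smul_eq_mul, Complex.re_ofReal_mul]
  refine ⟨hzre, ?_⟩
  exact mul_le_mul_of_nonneg_left (hkey i) (hq i)
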